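/- arXiv:1306.2390 — 2 statements merged into one kernel-verified Lean document; each statement's English description precedes it below -/
import Mathlib

section
/- Fix n ≥ 1 and k ∈ {1, …, n}. Let a₁, …, a_k ∈ ℂ with a_k real and a_k > 0 and |a₁|² + ⋯ + |a_k|² = 1, and suppose the unit acorn A = { z ∈ ℂⁿ : |z₁| + ⋯ + |z_n| < 1 } is contained in the half-space { z ∈ ℂⁿ : Re( a₁ z₁ + ⋯ + a_{k−1} z_{k−1} + a_k (z_k − 1) ) < 0 }. Then |a_ℓ| ≤ a_k for every ℓ = 1, …, k, and consequently a_k ≥ 1/√k ≥ 1/√n. -/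
open Metric Set

/-- If the unit acorn `A = { z : |z₁| + ⋯ + |z_n| < 1 }` lies in the
half-space `{ z : Re(a₁ z₁ + ⋯ + a_{k-1} z_{k-1} + a_k (z_k - 1)) < 0 }`, where
`a_k > 0` is real and `|a₁|² + ⋯ + |a_k|² = 1`, then `|a_ℓ| ≤ a_k` for all `ℓ`, and
consequently `a_k ≥ 1/√k ≥ 1/√n`.  (Here the index `k ∈ {1,…,n}` is encoded as
`k+1` coefficients `a : Fin (k+1) → ℂ` with `k + 1 ≤ n`.) -/
theorem acorn_halfspace_coefficient_bound (n k : ℕ) (hn : 1 ≤ n) (hk : k + 1 ≤ n)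
    (a : Fin (k + 1) → ℂ)
    (hreal : (a (Fin.last k)).im = 0) (hpos : 0 < (a (Fin.last k)).re)
    (hnorm : ∑ ℓ : Fin (k + 1), ‖a ℓ‖ ^ 2 = 1)
    (hhalf : { z : EuclideanSpace ℂ (Fin n) | ∑ i : Fin n, ‖z i‖ < 1 } ⊆
      { z : EuclideanSpace ℂ (Fin n) |
        ((∑ ℓ : Fin (k + 1), a ℓ * z (Fin.castLE hk ℓ)) - a (Fin.last k)).re < 0 }) :
    (∀ ℓ : Fin (k + 1), ‖a ℓ‖ ≤ (a (Fin.last k)).re) ∧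
    1 / Real.sqrt (k + 1) ≤ (a (Fin.last k)).re ∧
    1 / Real.sqrt n ≤ 1 / Real.sqrt (k + 1) := by
  set c := (a (Fin.last k)).re with hc
  -- main bound
  have main : ∀ ℓ : Fin (k + 1), ‖a ℓ‖ ≤ c := by
    intro ℓ
    by_contra hlt
    push_neg at hlt
    have hna : a ℓ ≠ 0 := by
      intro h0; rw [h0, norm_zero] at hlt; exact absurd hlt (not_lt.2 hpos.le)
    have hnorm_pos : (0:ℝ) < ‖a ℓ‖ := norm_pos_iff.2 hna
    set r : ℝ := (c + ‖a ℓ‖) / (2 * ‖a ℓ‖) with hr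
    have hr_pos : 0 < r := by positivity
    have hr_lt : r < 1 := by
      rw [hr, div_lt_one (by positivity)]
      linarith
    set w : ℂ := (r : ℂ) * (starRingEnd ℂ) (a ℓ) / (‖a ℓ‖ : ℂ) with hw
    have hwnorm : ‖w‖ = r := by
      rw [hw]
      rw [norm_div, norm_mul, Complex.norm_real, RCLike.norm_conj,
        Complex.norm_real, Real.norm_of_nonneg hr_pos.le,
        Real.norm_of_nonneg hnorm_pos.le, mul_div_assoc,
        div_self hnorm_pos.ne', mul_one]
    set z : EuclideanSpace ℂ (Fin n) := EuclideanSpace.single (Fin.castLE hk ℓ) w with hz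
    have hzmem : z ∈ { z : EuclideanSpace ℂ (Fin n) | ∑ i : Fin n, ‖z i‖ < 1 } := by
      have : ∑ i : Fin n, ‖z i‖ = ‖w‖ := by
        rw [hz]
        rw [Finset.sum_eq_single (Fin.castLE hk ℓ)]
        · simp [EuclideanSpace.single_apply]
        · intro b _ hb
          simp only [EuclideanSpace.single_apply, if_neg hb, norm_zero]
        · simp
      show ∑ i : Fin n, ‖z i‖ < 1
      rw [this, hwnorm]; exact hr_lt
    have hhz := hhalf hzmem
    simp only [Set.mem_setOf_eq] at hhz
    have hsum : (∑ ℓ' : Fin (k + 1), a ℓ' * z (Fin.castLE hk ℓ')) = a ℓ * w := by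
      rw [Finset.sum_eq_single ℓ]
      · simp [hz, EuclideanSpace.single_apply]
      · intro b _ hb
        have : Fin.castLE hk b ≠ Fin.castLE hk ℓ := by
          simpa [Fin.castLE_inj] using hb
        simp [hz, EuclideanSpace.single_apply, this]
      · simp
    have hAne : ((‖a ℓ‖ : ℝ) : ℂ) ≠ 0 := by
      exact_mod_cast hnorm_pos.ne'
    have key : a ℓ * (starRingEnd ℂ) (a ℓ) = ((‖a ℓ‖ : ℝ) : ℂ) ^ 2 := by
      rw [Complex.mul_conj, Complex.normSq_eq_norm_sq]
      push_cast
      ring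
    have haw : a ℓ * w = ((r * ‖a ℓ‖ : ℝ) : ℂ) := by
      rw [hw]
      have e1 : a ℓ * ((r : ℂ) * (starRingEnd ℂ) (a ℓ) / (‖a ℓ‖ : ℂ)) =
          (r : ℂ) * (a ℓ * (starRingEnd ℂ) (a ℓ)) / (‖a ℓ‖ : ℂ) := by ring
      rw [e1, key, pow_two, mul_div_assoc, mul_div_assoc, div_self hAne, mul_one]
      norm_cast
    rw [hsum, haw] at hhz
    have : r * ‖a ℓ‖ - c < 0 := by
      simpa [Complex.sub_re, Complex.ofReal_re] using hhz
    have hrval : r * ‖a ℓ‖ = (c + ‖a ℓ‖) / 2 := by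
      rw [hr, div_mul_eq_mul_div, mul_comm 2 ‖a ℓ‖, ← div_div, mul_div_assoc,
        div_self hnorm_pos.ne', mul_one]
    rw [hrval] at this
    linarith
  refine ⟨main, ?_, ?_⟩
  · have h1 : (1:ℝ) ≤ (k + 1) * c ^ 2 := by
      calc (1:ℝ) = ∑ ℓ : Fin (k + 1), ‖a ℓ‖ ^ 2 := hnorm.symm
        _ ≤ ∑ _ℓ : Fin (k + 1), c ^ 2 := by
            apply Finset.sum_le_sum
            intro i _
            exact pow_le_pow_left₀ (norm_nonneg _) (main i) 2
        _ = (k + 1) * c ^ 2 := by simp [Finset.sum_const, mul_comm]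
    have hk1 : (0:ℝ) < (k:ℝ) + 1 := by positivity
    have h2 : 1 / ((k:ℝ) + 1) ≤ c ^ 2 := by
      rw [div_le_iff₀ hk1]; linarith
    have h3 := Real.sqrt_le_sqrt h2
    rw [one_div, Real.sqrt_inv, ← one_div, Real.sqrt_sq hpos.le] at h3
    exact h3
  · have h1 : Real.sqrt (k + 1) ≤ Real.sqrt n := by
      apply Real.sqrt_le_sqrt
      push_cast
      exact_mod_cast hk
    apply one_div_le_one_div_of_le
    · positivity
    · exact h1
end

section
/- Let U ⊆ ℂ² be the open 1/10-tubular neighborhood of the circle S = { (e^{it}, 0) : t ∈ ℝ }, i.e., U = { z ∈ ℂ² : dist(z, S) < 1/10 }, and let p = (9/10, 0) ∈ ∂U. Then for every holomorphic automorphism ψ of ℂ² (a bijective holomorphic map ψ : ℂ² → ℂ² with holomorphic inverse), there is no ball B(c, R) ⊆ ℂ² with ψ(U) ⊆ B(c, R) and ‖ψ(p) − c‖ = R. In particular ψ(p) is not a spherically-extreme boundary point of ψ(U) for any ψ ∈ Aut(ℂ²). -/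
open Metric Set

/-- The circle `S = { (e^{it}, 0) : t ∈ ℝ } ⊆ ℂ²`. -/
noncomputable def circleS : Set (EuclideanSpace ℂ (Fin 2)) :=
  { z | ∃ t : ℝ, z = (EuclideanSpace.equiv (Fin 2) ℂ).symm ![Complex.exp (t * Complex.I), 0] }

/-- The open `1/10`-tubular neighborhood `U` of the circle `S`. -/
noncomputable def tubeU : Set (EuclideanSpace ℂ (Fin 2)) :=
  { z | Metric.infDist z circleS < 1 / 10 }

/-- The boundary point `p = (9/10, 0)` of `U`. -/
noncomputable def ptP : EuclideanSpace ℂ (Fin 2) :=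
  (EuclideanSpace.equiv (Fin 2) ℂ).symm ![(9 / 10 : ℂ), 0]

/-- The embedding `w ↦ (w, 0)` of `ℂ` into `ℂ²`. -/
noncomputable def embC (w : ℂ) : EuclideanSpace ℂ (Fin 2) :=
  (EuclideanSpace.equiv (Fin 2) ℂ).symm ![w, 0]

lemma embC_differentiable : Differentiable ℂ embC := by
  have h1 : Differentiable ℂ (fun w : ℂ => (![w, 0] : Fin 2 → ℂ)) := by
    rw [differentiable_pi]
    intro i
    fin_cases i <;> simp [differentiable_id, differentiable_const]
  exact ((EuclideanSpace.equiv (Fin 2) ℂ).symm.differentiable).comp h1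

lemma embC_sphere_mem_circleS {w : ℂ} (hw : w ∈ sphere (0 : ℂ) 1) : embC w ∈ circleS := by
  refine ⟨w.arg, ?_⟩
  have habs : ‖w‖ = 1 := by simpa using hw
  have : Complex.exp (w.arg * Complex.I) = w := by
    have := Complex.norm_mul_exp_arg_mul_I w
    rwa [habs, Complex.ofReal_one, one_mul] at this
  rw [embC, this]

/-- For no holomorphic automorphism `ψ` of `ℂ²` is there a ball
`B(c, R)` with `ψ(U) ⊆ B(c, R)` and `‖ψ(p) - c‖ = R`; i.e. `ψ(p)` cannot be made
spherically-extreme for `ψ(U)` by an automorphism of `ℂ²`. -/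
theorem no_spherically_extreme_via_automorphism
    (ψ ψinv : EuclideanSpace ℂ (Fin 2) → EuclideanSpace ℂ (Fin 2))
    (hψ : Differentiable ℂ ψ) (hψinv : Differentiable ℂ ψinv)
    (hleft : Function.LeftInverse ψinv ψ) (hright : Function.RightInverse ψinv ψ) :
    ¬ ∃ (c : EuclideanSpace ℂ (Fin 2)) (R : ℝ), 0 < R ∧
        ψ '' tubeU ⊆ ball c R ∧ ‖ψ ptP - c‖ = R := by
  rintro ⟨c, R, hR, hsub, heq⟩
  -- the analytic disc
  set f : ℂ → EuclideanSpace ℂ (Fin 2) := fun w => ψ (embC w) - c with hf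
  have hfd : Differentiable ℂ f :=
    ((hψ.comp embC_differentiable).sub_const c)
  -- boundary points of the disc land in `ball c R`
  have hbd : ∀ w ∈ sphere (0 : ℂ) 1, ‖f w‖ < R := by
    intro w hw
    have hmem : embC w ∈ tubeU := by
      have : Metric.infDist (embC w) circleS = 0 :=
        Metric.infDist_zero_of_mem (embC_sphere_mem_circleS hw)
      simp only [tubeU, mem_setOf_eq, this]
      norm_num
    have : ψ (embC w) ∈ ball c R := hsub ⟨embC w, hmem, rfl⟩
    simpa [hf, dist_eq_norm] using this
  -- strict bound via compactness of the circle
  obtain ⟨w0, hw0, hmax⟩ :=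
    (isCompact_sphere (0 : ℂ) 1).exists_isMaxOn ⟨1, by simp⟩
      (hfd.continuous.norm.continuousOn)
  have hC : ‖f w0‖ < R := hbd w0 hw0
  -- maximum modulus principle on the unit ball
  have hfront : ∀ w ∈ frontier (ball (0 : ℂ) 1), ‖f w‖ ≤ ‖f w0‖ := by
    intro w hw
    rw [frontier_ball (0 : ℂ) one_ne_zero] at hw
    exact hmax hw
  have hcl : (9 / 10 : ℂ) ∈ closure (ball (0 : ℂ) 1) := by
    rw [closure_ball (0 : ℂ) one_ne_zero]
    simp only [mem_closedBall, dist_zero_right]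
    rw [show ((9:ℂ)/10) = ((9/10 : ℝ) : ℂ) by norm_num]
    rw [Complex.norm_real]
    norm_num
  have hle : ‖f (9 / 10)‖ ≤ ‖f w0‖ :=
    Complex.norm_le_of_forall_mem_frontier_norm_le isBounded_ball
      hfd.diffContOnCl hfront hcl
  have hptP : ptP = embC (9 / 10) := rfl
  have : ‖ψ ptP - c‖ < R := by
    rw [hptP]
    exact lt_of_le_of_lt hle hC
  exact absurd heq (ne_of_lt this)
end
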